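/- arXiv:1812.04168 — 2 statements merged into one kernel-verified Lean document; each statement's English description precedes it below -/
import Mathlib

section
/- Suppose P(ν) = [[Y, I],[I, X]] is positive definite (so in particular X is positive definite). Then the following are equivalent: (i) S(ν) = [[δ·P(ν), F̃(ν)ᵀ],[F̃(ν), P(ν)]] is positive semidefinite; (ii) δ·P(ν) − R(ν)ᵀ·X·R(ν) is positive semidefinite; (iii) the block matrix [[δ·P(ν), R(ν)ᵀ],[R(ν), X⁻¹]] is positive semidefinite. Moreover F̃(ν) = P(ν)·[[0],[I]]·R(ν), so that F̃(ν)ᵀ·P(ν)⁻¹·F̃(ν) = R(ν)ᵀ·X·R(ν). -/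
open Matrix

/-- P(ν) = [[Y, I],[I, X]]. -/
def Pnu {n : ℕ} (X Y : Matrix (Fin n) (Fin n) ℝ) :
    Matrix (Fin n ⊕ Fin n) (Fin n ⊕ Fin n) ℝ :=
  Matrix.fromBlocks Y 1 1 X

/-- R(ν) = [A·Y + B·K₃, A + B·K₄·C]. -/
def Rnu {n nu ny : ℕ} (A : Matrix (Fin n) (Fin n) ℝ) (B : Matrix (Fin n) (Fin nu) ℝ)
    (C : Matrix (Fin ny) (Fin n) ℝ) (Y : Matrix (Fin n) (Fin n) ℝ)
    (K3 : Matrix (Fin nu) (Fin n) ℝ) (K4 : Matrix (Fin nu) (Fin ny) ℝ) :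
    Matrix (Fin n) (Fin n ⊕ Fin n) ℝ :=
  Matrix.fromCols (A * Y + B * K3) (A + B * K4 * C)

/-- F̃(ν) = [[A·Y + B·K₃, A + B·K₄·C],[X·(A·Y + B·K₃), X·(A + B·K₄·C)]]. -/
def Ftil {n nu ny : ℕ} (A : Matrix (Fin n) (Fin n) ℝ) (B : Matrix (Fin n) (Fin nu) ℝ)
    (C : Matrix (Fin ny) (Fin n) ℝ) (X Y : Matrix (Fin n) (Fin n) ℝ)
    (K3 : Matrix (Fin nu) (Fin n) ℝ) (K4 : Matrix (Fin nu) (Fin ny) ℝ) :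
    Matrix (Fin n ⊕ Fin n) (Fin n ⊕ Fin n) ℝ :=
  Matrix.fromBlocks (A * Y + B * K3) (A + B * K4 * C)
    (X * (A * Y + B * K3)) (X * (A + B * K4 * C))

theorem stmt5 {n nu ny : ℕ}
    (A : Matrix (Fin n) (Fin n) ℝ) (B : Matrix (Fin n) (Fin nu) ℝ)
    (C : Matrix (Fin ny) (Fin n) ℝ)
    (X Y : Matrix (Fin n) (Fin n) ℝ) (hX : X.IsSymm) (hY : Y.IsSymm)
    (K1 : Matrix (Fin n) (Fin n) ℝ) (K2 : Matrix (Fin n) (Fin ny) ℝ)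
    (K3 : Matrix (Fin nu) (Fin n) ℝ) (K4 : Matrix (Fin nu) (Fin ny) ℝ)
    (δ : ℝ) (hδ : δ ∈ Set.Ici (1 : ℝ))
    (hP : (Pnu X Y).PosDef) :
    ((Matrix.fromBlocks (δ • Pnu X Y) (Ftil A B C X Y K3 K4)ᵀ
        (Ftil A B C X Y K3 K4) (Pnu X Y)).PosSemidef ↔
      (δ • Pnu X Y -
        (Rnu A B C Y K3 K4)ᵀ * X * Rnu A B C Y K3 K4).PosSemidef) ∧
    ((Matrix.fromBlocks (δ • Pnu X Y) (Ftil A B C X Y K3 K4)ᵀ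
        (Ftil A B C X Y K3 K4) (Pnu X Y)).PosSemidef ↔
      (Matrix.fromBlocks (δ • Pnu X Y) (Rnu A B C Y K3 K4)ᵀ
        (Rnu A B C Y K3 K4) X⁻¹).PosSemidef) ∧
    Ftil A B C X Y K3 K4 =
      Pnu X Y * Matrix.fromRows (0 : Matrix (Fin n) (Fin n) ℝ)
        (1 : Matrix (Fin n) (Fin n) ℝ) * Rnu A B C Y K3 K4 ∧
    (Ftil A B C X Y K3 K4)ᵀ * (Pnu X Y)⁻¹ * Ftil A B C X Y K3 K4 =
      (Rnu A B C Y K3 K4)ᵀ * X * Rnu A B C Y K3 K4 := by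
  set P := Pnu X Y with hPdef
  set R := Rnu A B C Y K3 K4 with hRdef
  set F := Ftil A B C X Y K3 K4 with hFdef
  have hXpd : X.PosDef := by
    refine Matrix.PosDef.of_dotProduct_mulVec_pos (by rw [Matrix.IsHermitian, Matrix.conjTranspose_eq_transpose_of_trivial]; exact hX)
      fun v hv => ?_
    have h0 : (Sum.elim (0 : Fin n → ℝ) v) ≠ 0 := by
      intro h
      apply hv
      ext i
      exact congrFun h (Sum.inr i)
    have := hP.dotProduct_mulVec_pos h0
    simpa [hPdef, Pnu, Matrix.fromBlocks_mulVec, sumElim_dotProduct_sumElim]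
      using this
  have hdetP : IsUnit P.det := hP.det_pos.ne'.isUnit
  have hdetX : IsUnit X.det := hXpd.det_pos.ne'.isUnit
  haveI : Invertible P := hP.isUnit.invertible
  haveI : Invertible X := hXpd.isUnit.invertible
  have hPsymm : Pᵀ = P := by
    rw [← Matrix.conjTranspose_eq_transpose_of_trivial]; exact hP.isHermitian
  -- F = P * N * R
  have hFfact : F = P * Matrix.fromRows (0 : Matrix (Fin n) (Fin n) ℝ) (1 : Matrix (Fin n) (Fin n) ℝ) * R := by
    rw [hFdef, hPdef, hRdef, Ftil, Pnu, Rnu, Matrix.fromBlocks_mul_fromRows,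
      Matrix.fromRows_mul_fromCols]
    simp
  -- Nᵀ * P * N = X
  have hNPN : (Matrix.fromRows (0 : Matrix (Fin n) (Fin n) ℝ) (1 : Matrix (Fin n) (Fin n) ℝ))ᵀ * P *
      Matrix.fromRows (0 : Matrix (Fin n) (Fin n) ℝ) (1 : Matrix (Fin n) (Fin n) ℝ) = X := by
    rw [Matrix.transpose_fromRows, hPdef, Pnu, Matrix.fromCols_mul_fromBlocks,
      Matrix.fromCols_mul_fromRows]
    simp
  have hkey : Fᵀ * P⁻¹ * F = Rᵀ * X * R := by
    rw [hFfact, Matrix.transpose_mul, Matrix.transpose_mul, hPsymm, ← hNPN]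
    simp only [Matrix.mul_assoc, Matrix.mul_nonsing_inv_cancel_left _ _ hdetP]
  have hconjF : (Fᵀ)ᴴ = F := by
    rw [Matrix.conjTranspose_eq_transpose_of_trivial, Matrix.transpose_transpose]
  have hconjR : (Rᵀ)ᴴ = R := by
    rw [Matrix.conjTranspose_eq_transpose_of_trivial, Matrix.transpose_transpose]
  have h1 := Matrix.PosDef.fromBlocks₂₂ (δ • P) Fᵀ hP
  rw [hconjF, hkey] at h1
  haveI : Invertible X⁻¹ := hXpd.inv.isUnit.invertible
  have h2 := Matrix.PosDef.fromBlocks₂₂ (δ • P) Rᵀ hXpd.inv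
  rw [hconjR, Matrix.nonsing_inv_nonsing_inv X hdetX] at h2
  exact ⟨h1, h1.trans h2.symm, hFfact, hkey⟩
end

section
/- Fix A ∈ ℝ^{n×n}, B ∈ ℝ^{n×n_u}, C ∈ ℝ^{n_y×n}, μ ∈ [−1,0), and δ ∈ [1,∞). If there exists ν = (X, Y, K_1, K_2, K_3, K_4) with symmetric X, Y ∈ ℝ^{n×n}, K_1 ∈ ℝ^{n×n}, K_2 ∈ ℝ^{n×n_y}, K_3 ∈ ℝ^{n_u×n}, K_4 ∈ ℝ^{n_u×n_y} such that P(ν) ≻ 0, L(ν) ⪰ 0, and L̃(ν) ⪰ 0, then there exist a symmetric positive definite matrix P ∈ ℝ^{2n×2n} and controller matrices A_c ∈ ℝ^{n×n}, B_c ∈ ℝ^{n×n_y}, C_c ∈ ℝ^{n_u×n}, D_c ∈ ℝ^{n_u×n_y} such that the closed-loop matrix F = [[A + B·D_c·C, B·C_c],[B_c·C, A_c]] satisfies the analysis inequalities Fᵀ·P·F ⪯ (1+μ)·P and Fᵀ·H·P·H·F ⪯ δ·P, where H = [[I, 0],[0, 0]]. -/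
open Matrix

section Helpers
variable {k l : Type*} [Fintype k] [Fintype l]

omit [Fintype k] [Fintype l] in
lemma conjT_eq (M : Matrix k l ℝ) : Mᴴ = Mᵀ := by
  ext i j; simp [conjTranspose_apply]

lemma posDef_conj [DecidableEq k] {M : Matrix k k ℝ} (hM : M.PosDef) {B : Matrix k k ℝ}
    (hB : IsUnit B) : (Bᵀ * M * B).PosDef := by
  rw [← conjT_eq B]
  refine PosDef.of_dotProduct_mulVec_pos (isHermitian_conjTranspose_mul_mul B hM.1) fun x hx => ?_
  have hBx : B *ᵥ x ≠ 0 :=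
    ((Matrix.mulVec_injective_iff_isUnit.mpr hB).ne_iff' (Matrix.mulVec_zero B)).2 hx
  simpa only [star_mulVec, dotProduct_mulVec, vecMul_vecMul] using hM.dotProduct_mulVec_pos hBx

lemma posDef_blocks {A : Matrix k k ℝ} {B : Matrix k l ℝ} {C : Matrix l k ℝ} {D : Matrix l l ℝ}
    (h : (fromBlocks A B C D).PosDef) : A.PosDef ∧ D.PosDef := by
  constructor
  · refine PosDef.of_dotProduct_mulVec_pos ?_ fun x hx => ?_
    · have h1 := congrArg Matrix.toBlocks₁₁ h.1
      simpa [Matrix.IsSymm, Matrix.fromBlocks_transpose, Matrix.fromBlocks_conjTranspose, Matrix.toBlocks_fromBlocks₁₁] using h1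
    · have hne : (Sum.elim x 0 : k ⊕ l → ℝ) ≠ 0 :=
        fun hc => hx (funext fun i => congrFun hc (Sum.inl i))
      have hst : star (Sum.elim x (0 : l → ℝ)) = Sum.elim (star x) 0 :=
        funext fun i => by cases i <;> simp
      have h2 := h.dotProduct_mulVec_pos hne
      rw [hst, Matrix.fromBlocks_mulVec] at h2
      simpa [sumElim_dotProduct_sumElim] using h2
  · refine PosDef.of_dotProduct_mulVec_pos ?_ fun x hx => ?_
    · have h1 := congrArg Matrix.toBlocks₂₂ h.1
      simpa [Matrix.IsSymm, Matrix.fromBlocks_transpose, Matrix.fromBlocks_conjTranspose, Matrix.toBlocks_fromBlocks₂₂] using h1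
    · have hne : (Sum.elim (0 : k → ℝ) x : k ⊕ l → ℝ) ≠ 0 :=
        fun hc => hx (funext fun i => congrFun hc (Sum.inr i))
      have hst : star (Sum.elim (0 : k → ℝ) x) = Sum.elim (0 : k → ℝ) (star x) :=
        funext fun i => by cases i <;> simp
      have h2 := h.dotProduct_mulVec_pos hne
      rw [hst, Matrix.fromBlocks_mulVec] at h2
      simpa [sumElim_dotProduct_sumElim] using h2

lemma psd_pad [DecidableEq l] {D : Matrix l l ℝ} (hD : D.PosSemidef) :
    (fromBlocks (0 : Matrix k k ℝ) (0 : Matrix k l ℝ) (0 : Matrix l k ℝ) D).PosSemidef := by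
  have h := hD.mul_mul_conjTranspose_same (fromRows (0 : Matrix k l ℝ) (1 : Matrix l l ℝ))
  rw [conjT_eq] at h
  have e : fromRows (0 : Matrix k l ℝ) (1 : Matrix l l ℝ) * D *
      (fromRows (0 : Matrix k l ℝ) (1 : Matrix l l ℝ))ᵀ =
      fromBlocks (0 : Matrix k k ℝ) (0 : Matrix k l ℝ) (0 : Matrix l k ℝ) D := by
    rw [transpose_fromRows, fromRows_mul, fromRows_mul_fromCols]
    simp
  rwa [e] at h

omit [Fintype l] in
lemma conj_cancel [DecidableEq k] {Q S M : Matrix k k ℝ}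
    (h1 : Q * S = 1) : Sᵀ * (Qᵀ * M * Q) * S = M := by
  have h := congrArg Matrix.transpose h1
  rw [transpose_mul, transpose_one] at h
  calc Sᵀ * (Qᵀ * M * Q) * S = (Sᵀ * Qᵀ) * M * (Q * S) := by
        simp only [Matrix.mul_assoc]
    _ = M := by rw [h, h1, Matrix.one_mul, Matrix.mul_one]

omit [Fintype l] in
lemma conj_blocks (S : Matrix k k ℝ) (A B C D : Matrix k k ℝ) :
    (fromBlocks S 0 0 S)ᵀ * (fromBlocks A B C D) * (fromBlocks S 0 0 S) =
      fromBlocks (Sᵀ * A * S) (Sᵀ * B * S) (Sᵀ * C * S) (Sᵀ * D * S) := by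
  rw [fromBlocks_transpose, fromBlocks_multiply, fromBlocks_multiply]
  simp

lemma conj_blocks2 [DecidableEq l] (S : Matrix k k ℝ)
    (A : Matrix k k ℝ) (B : Matrix k l ℝ) (C : Matrix l k ℝ) (D : Matrix l l ℝ) :
    (fromBlocks S 0 0 (1 : Matrix l l ℝ))ᵀ * fromBlocks A B C D * fromBlocks S 0 0 1 =
      fromBlocks (Sᵀ * A * S) (Sᵀ * B) (C * S) D := by
  rw [fromBlocks_transpose, fromBlocks_multiply, fromBlocks_multiply]
  simp

end Helpers

/-- F(ν) = [[A·Y + B·K₃, A + B·K₄·C],[K₁, X·A + K₂·C]]. -/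
def Fnu {n nu ny : ℕ} (A : Matrix (Fin n) (Fin n) ℝ) (B : Matrix (Fin n) (Fin nu) ℝ)
    (C : Matrix (Fin ny) (Fin n) ℝ) (X Y : Matrix (Fin n) (Fin n) ℝ)
    (K1 : Matrix (Fin n) (Fin n) ℝ) (K2 : Matrix (Fin n) (Fin ny) ℝ)
    (K3 : Matrix (Fin nu) (Fin n) ℝ) (K4 : Matrix (Fin nu) (Fin ny) ℝ) :
    Matrix (Fin n ⊕ Fin n) (Fin n ⊕ Fin n) ℝ :=
  Matrix.fromBlocks (A * Y + B * K3) (A + B * K4 * C) K1 (X * A + K2 * C)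

theorem stmt9 {n nu ny : ℕ}
    (A : Matrix (Fin n) (Fin n) ℝ) (B : Matrix (Fin n) (Fin nu) ℝ)
    (C : Matrix (Fin ny) (Fin n) ℝ)
    (μ δ : ℝ) (hμ : μ ∈ Set.Ico (-1 : ℝ) 0) (hδ : δ ∈ Set.Ici (1 : ℝ))
    (X Y : Matrix (Fin n) (Fin n) ℝ) (hX : X.IsSymm) (hY : Y.IsSymm)
    (K1 : Matrix (Fin n) (Fin n) ℝ) (K2 : Matrix (Fin n) (Fin ny) ℝ)
    (K3 : Matrix (Fin nu) (Fin n) ℝ) (K4 : Matrix (Fin nu) (Fin ny) ℝ)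
    (hP : (Pnu X Y).PosDef)
    (hL : (Matrix.fromBlocks ((1 + μ) • Pnu X Y) (Fnu A B C X Y K1 K2 K3 K4)ᵀ
      (Fnu A B C X Y K1 K2 K3 K4) (Pnu X Y)).PosSemidef)
    (hLtil : (Matrix.fromBlocks (δ • Pnu X Y) (Rnu A B C Y K3 K4)ᵀ
      (Rnu A B C Y K3 K4) ((2 : ℝ) • 1 - X)).PosSemidef) :
    ∃ (P : Matrix (Fin n ⊕ Fin n) (Fin n ⊕ Fin n) ℝ)
      (Ac : Matrix (Fin n) (Fin n) ℝ) (Bc : Matrix (Fin n) (Fin ny) ℝ)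
      (Cc : Matrix (Fin nu) (Fin n) ℝ) (Dc : Matrix (Fin nu) (Fin ny) ℝ),
      P.PosDef ∧
      ((1 + μ) • P -
        (Matrix.fromBlocks (A + B * Dc * C) (B * Cc) (Bc * C) Ac)ᵀ * P *
          Matrix.fromBlocks (A + B * Dc * C) (B * Cc) (Bc * C) Ac).PosSemidef ∧
      (δ • P -
        (Matrix.fromBlocks (A + B * Dc * C) (B * Cc) (Bc * C) Ac)ᵀ *
          Matrix.fromBlocks (1 : Matrix (Fin n) (Fin n) ℝ) 0 0
            (0 : Matrix (Fin n) (Fin n) ℝ) * P *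
          Matrix.fromBlocks (1 : Matrix (Fin n) (Fin n) ℝ) 0 0
            (0 : Matrix (Fin n) (Fin n) ℝ) *
          Matrix.fromBlocks (A + B * Dc * C) (B * Cc) (Bc * C) Ac).PosSemidef := by
  have hP' : (fromBlocks Y (1 : Matrix (Fin n) (Fin n) ℝ) 1 X).PosDef := hP
  obtain ⟨hYpd, hXpd⟩ := posDef_blocks hP'
  have hYdet : IsUnit Y.det := hYpd.det_pos.ne'.isUnit
  have hXdet : IsUnit X.det := hXpd.det_pos.ne'.isUnit
  letI := hYpd.isUnit.invertible
  have hdet : (fromBlocks Y (1 : Matrix (Fin n) (Fin n) ℝ) 1 X).det ≠ 0 := hP'.det_pos.ne'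
  rw [Matrix.det_fromBlocks₁₁] at hdet
  have hdet2 : (X - Y⁻¹).det ≠ 0 := by
    have := (mul_ne_zero_iff.mp hdet).2
    simpa [invOf_eq_nonsing_inv] using this
  have hSchurU : IsUnit (X - Y⁻¹) := (Matrix.isUnit_iff_isUnit_det _).mpr hdet2.isUnit
  have hW : IsUnit ((1 : Matrix (Fin n) (Fin n) ℝ) - X * Y) := by
    have h5 : (X - Y⁻¹) * Y = X * Y - 1 := by
      rw [Matrix.sub_mul, Matrix.nonsing_inv_mul _ hYdet]
    have h6 : IsUnit (X * Y - 1) := h5 ▸ hSchurU.mul hYpd.isUnit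
    have := h6.neg
    rwa [neg_sub] at this
  set W : Matrix (Fin n) (Fin n) ℝ := 1 - X * Y with hWdef
  have hWdet : IsUnit W.det := (Matrix.isUnit_iff_isUnit_det W).mp hW
  have hWWi : W * W⁻¹ = 1 := Matrix.mul_nonsing_inv _ hWdet
  have hWiW : W⁻¹ * W = 1 := Matrix.nonsing_inv_mul _ hWdet
  set Cc : Matrix (Fin nu) (Fin n) ℝ := (K3 - K4 * C * Y) * W⁻¹ with hCc
  set Bc : Matrix (Fin n) (Fin ny) ℝ := K2 - X * B * K4 with hBc
  set Ac : Matrix (Fin n) (Fin n) ℝ :=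
    (K1 - X * (A + B * K4 * C) * Y - Bc * C * Y - X * B * (K3 - K4 * C * Y)) * W⁻¹ with hAc
  set Fcl : Matrix (Fin n ⊕ Fin n) (Fin n ⊕ Fin n) ℝ :=
    fromBlocks (A + B * K4 * C) (B * Cc) (Bc * C) Ac with hFcl
  set Q : Matrix (Fin n ⊕ Fin n) (Fin n ⊕ Fin n) ℝ := fromBlocks Y 1 W 0 with hQ
  set S : Matrix (Fin n ⊕ Fin n) (Fin n ⊕ Fin n) ℝ :=
    fromBlocks 0 W⁻¹ 1 (-(Y * W⁻¹)) with hS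
  set Pm : Matrix (Fin n ⊕ Fin n) (Fin n ⊕ Fin n) ℝ :=
    fromBlocks X 1 1 (-(Y * W⁻¹)) with hPm
  have hCcW : Cc * W = K3 - K4 * C * Y := by
    rw [hCc, Matrix.mul_assoc, hWiW, Matrix.mul_one]
  have hAcW : Ac * W = K1 - X * (A + B * K4 * C) * Y - Bc * C * Y
      - X * B * (K3 - K4 * C * Y) := by
    rw [hAc, Matrix.mul_assoc, hWiW, Matrix.mul_one]
  have hYW : ((1 : Matrix (Fin n) (Fin n) ℝ) - Y * X) * (Y * W⁻¹) = Y := by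
    have h7 : ((1 : Matrix (Fin n) (Fin n) ℝ) - Y * X) * Y = Y * W := by
      rw [hWdef]
      simp only [Matrix.sub_mul, Matrix.mul_sub, Matrix.one_mul, Matrix.mul_one,
        Matrix.mul_assoc]
    rw [← Matrix.mul_assoc, h7, Matrix.mul_assoc, hWWi, Matrix.mul_one]
  have h1 : Q * S = 1 := by
    rw [hQ, hS, Matrix.fromBlocks_multiply, ← fromBlocks_one, Matrix.fromBlocks_inj]
    exact ⟨by simp, by simp, by simp, by simp [hWWi]⟩
  have h2 : S * Q = 1 := by
    rw [hQ, hS, Matrix.fromBlocks_multiply, ← fromBlocks_one, Matrix.fromBlocks_inj]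
    exact ⟨by simp [hWiW], by simp, by simp [Matrix.mul_assoc, hWiW], by simp⟩
  have hWT : Wᵀ = 1 - Y * X := by
    rw [hWdef, transpose_sub, transpose_one, transpose_mul, hX.eq, hY.eq]
  have hQT : Qᵀ = fromBlocks Y ((1 : Matrix (Fin n) (Fin n) ℝ) - Y * X) 1 0 := by
    rw [hQ, fromBlocks_transpose, hY.eq, hWT, transpose_one, transpose_zero]
  have h3a : Qᵀ * Pm = fromBlocks (1 : Matrix (Fin n) (Fin n) ℝ) 0 X 1 := by
    rw [hQT, hPm, Matrix.fromBlocks_multiply, Matrix.fromBlocks_inj]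
    refine ⟨?_, ?_, by simp, by simp⟩
    · simp only [Matrix.sub_mul, Matrix.one_mul, Matrix.mul_one]
      abel
    · rw [Matrix.mul_one, Matrix.mul_neg, hYW, add_neg_cancel]
  have h3 : Qᵀ * Pm * Q = fromBlocks Y (1 : Matrix (Fin n) (Fin n) ℝ) 1 X := by
    rw [h3a, hQ, Matrix.fromBlocks_multiply, Matrix.fromBlocks_inj]
    refine ⟨by simp, by simp, ?_, by simp⟩
    rw [hWdef]
    simp only [Matrix.one_mul]
    abel
  have hSu : IsUnit S := ⟨⟨S, Q, h2, h1⟩, rfl⟩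
  have hPval : Sᵀ * fromBlocks Y (1 : Matrix (Fin n) (Fin n) ℝ) 1 X * S = Pm := by
    rw [← h3]; exact conj_cancel h1
  have hPmpd : Pm.PosDef := by rw [← hPval]; exact posDef_conj hP' hSu
  have hPmdet : IsUnit Pm.det := hPmpd.det_pos.ne'.isUnit
  have hPmT : Pmᵀ = Pm := by rw [← conjT_eq]; exact hPmpd.1
  have hF0 : fromBlocks (1 : Matrix (Fin n) (Fin n) ℝ) 0 X 1 * Fcl * Q =
      fromBlocks (A * Y + B * K3) (A + B * K4 * C) K1 (X * A + K2 * C) := by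
    rw [hFcl, hQ, Matrix.fromBlocks_multiply, Matrix.fromBlocks_multiply,
      Matrix.fromBlocks_inj]
    refine ⟨?_, by simp, ?_, ?_⟩
    · rw [Matrix.one_mul, Matrix.one_mul, Matrix.zero_mul, Matrix.zero_mul, add_zero, add_zero,
        Matrix.mul_assoc B Cc W, hCcW]
      simp only [Matrix.mul_sub, Matrix.sub_mul, Matrix.mul_add, Matrix.add_mul,
        Matrix.mul_assoc]
      abel
    · rw [Matrix.one_mul, Matrix.one_mul, Matrix.add_mul, Matrix.add_mul,
        Matrix.mul_assoc X (B * Cc) W, Matrix.mul_assoc B Cc W, hCcW, hAcW]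
      simp only [Matrix.mul_sub, Matrix.sub_mul, Matrix.mul_add, Matrix.add_mul,
        Matrix.mul_assoc]
      abel
    · simp only [Matrix.one_mul, Matrix.mul_one, Matrix.mul_zero, add_zero]
      rw [hBc]
      simp only [Matrix.mul_sub, Matrix.sub_mul, Matrix.mul_add, Matrix.add_mul,
        Matrix.mul_assoc]
      abel
  have hF0' : fromBlocks (A * Y + B * K3) (A + B * K4 * C) K1 (X * A + K2 * C) =
      Qᵀ * (Pm * Fcl) * Q := by
    rw [← hF0, ← h3a]
    simp only [Matrix.mul_assoc]
  have hFid : Sᵀ * fromBlocks (A * Y + B * K3) (A + B * K4 * C) K1 (X * A + K2 * C) * S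
      = Pm * Fcl := by
    rw [hF0']
    exact conj_cancel h1
  -- first analysis inequality
  have hLb : (fromBlocks ((1 + μ) • fromBlocks Y (1 : Matrix (Fin n) (Fin n) ℝ) 1 X)
      (fromBlocks (A * Y + B * K3) (A + B * K4 * C) K1 (X * A + K2 * C))ᵀ
      (fromBlocks (A * Y + B * K3) (A + B * K4 * C) K1 (X * A + K2 * C))
      (fromBlocks Y (1 : Matrix (Fin n) (Fin n) ℝ) 1 X)).PosSemidef := hL
  have hcongr := hLb.conjTranspose_mul_mul_same (fromBlocks S 0 0 S)
  rw [conjT_eq, conj_blocks] at hcongr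
  have e1 : Sᵀ * ((1 + μ) • fromBlocks Y (1 : Matrix (Fin n) (Fin n) ℝ) 1 X) * S
      = (1 + μ) • Pm := by
    rw [Matrix.mul_smul, Matrix.smul_mul, hPval]
  have e2 : Sᵀ * (fromBlocks (A * Y + B * K3) (A + B * K4 * C) K1 (X * A + K2 * C))ᵀ * S
      = (Pm * Fcl)ᵀ := by
    have h := congrArg Matrix.transpose hFid
    simp only [transpose_mul, transpose_transpose, Matrix.mul_assoc] at h ⊢
    exact h
  rw [e1, e2, hFid, hPval] at hcongr
  letI := hPmpd.isUnit.invertible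
  have hBH : ((Pm * Fcl)ᵀ)ᴴ = Pm * Fcl := by rw [conjT_eq, transpose_transpose]
  have hcongr2 : (fromBlocks ((1 + μ) • Pm) (Pm * Fcl)ᵀ (((Pm * Fcl)ᵀ)ᴴ) Pm).PosSemidef := by
    rw [hBH]; exact hcongr
  have hs1 := (PosDef.fromBlocks₂₂ _ _ hPmpd).mp hcongr2
  have hred : (Pm * Fcl)ᵀ * Pm⁻¹ * ((Pm * Fcl)ᵀ)ᴴ = Fclᵀ * Pm * Fcl := by
    rw [hBH, transpose_mul, hPmT]
    calc Fclᵀ * Pm * Pm⁻¹ * (Pm * Fcl) = Fclᵀ * ((Pm * Pm⁻¹) * Pm) * Fcl := by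
          simp only [Matrix.mul_assoc]
      _ = Fclᵀ * Pm * Fcl := by rw [Matrix.mul_nonsing_inv _ hPmdet, Matrix.one_mul]
  rw [hred] at hs1
  -- second analysis inequality
  have hLtb : (fromBlocks (δ • fromBlocks Y (1 : Matrix (Fin n) (Fin n) ℝ) 1 X)
      (fromCols (A * Y + B * K3) (A + B * K4 * C))ᵀ
      (fromCols (A * Y + B * K3) (A + B * K4 * C)) ((2 : ℝ) • 1 - X)).PosSemidef := hLtil
  have hc2 := hLtb.conjTranspose_mul_mul_same
    (fromBlocks S 0 0 (1 : Matrix (Fin n) (Fin n) ℝ))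
  rw [conjT_eq, conj_blocks2] at hc2
  set G1 : Matrix (Fin n) (Fin n ⊕ Fin n) ℝ := fromCols (A + B * K4 * C) (B * Cc) with hG1
  have hRS : fromCols (A * Y + B * K3) (A + B * K4 * C) * S = G1 := by
    rw [hS, fromCols_mul_fromBlocks, hG1, hCc, fromCols_ext_iff]
    constructor
    · simp
    · simp only [Matrix.mul_sub, Matrix.sub_mul, Matrix.mul_add, Matrix.add_mul,
        Matrix.mul_neg, Matrix.neg_mul, Matrix.mul_zero, Matrix.zero_mul,
        Matrix.mul_one, Matrix.one_mul, add_zero, zero_add, Matrix.mul_assoc]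
      abel
  have e1' : Sᵀ * (δ • fromBlocks Y (1 : Matrix (Fin n) (Fin n) ℝ) 1 X) * S = δ • Pm := by
    rw [Matrix.mul_smul, Matrix.smul_mul, hPval]
  have e2' : Sᵀ * (fromCols (A * Y + B * K3) (A + B * K4 * C))ᵀ = G1ᵀ := by
    rw [← transpose_mul, hRS]
  rw [e1', e2', hRS] at hc2
  have hXiX : X⁻¹ * X = 1 := Matrix.nonsing_inv_mul _ hXdet
  have hXXi : X * X⁻¹ = 1 := Matrix.mul_nonsing_inv _ hXdet
  have hXT : ((1 : Matrix (Fin n) (Fin n) ℝ) - X)ᵀ = 1 - X := by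
    rw [transpose_sub, transpose_one, hX.eq]
  have hpadeq : ((1 : Matrix (Fin n) (Fin n) ℝ) - X) * X⁻¹ *
      ((1 : Matrix (Fin n) (Fin n) ℝ) - X)ᴴ = X⁻¹ - ((2 : ℝ) • 1 - X) := by
    rw [conjT_eq, hXT]
    simp only [Matrix.sub_mul, Matrix.mul_sub, Matrix.one_mul, Matrix.mul_one, hXXi, hXiX]
    rw [two_smul]
    abel
  have hpadPSD : (fromBlocks (0 : Matrix (Fin n ⊕ Fin n) (Fin n ⊕ Fin n) ℝ)
      (0 : Matrix (Fin n ⊕ Fin n) (Fin n) ℝ) (0 : Matrix (Fin n) (Fin n ⊕ Fin n) ℝ)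
      (X⁻¹ - ((2 : ℝ) • 1 - X))).PosSemidef := by
    refine psd_pad ?_
    rw [← hpadeq]
    exact (hXpd.inv.posSemidef).mul_mul_conjTranspose_same (1 - X)
  have hsum : fromBlocks (δ • Pm) G1ᵀ G1 ((2 : ℝ) • 1 - X) +
      fromBlocks 0 0 0 (X⁻¹ - ((2 : ℝ) • 1 - X)) = fromBlocks (δ • Pm) G1ᵀ G1 X⁻¹ := by
    rw [Matrix.fromBlocks_add, Matrix.fromBlocks_inj]
    exact ⟨add_zero _, add_zero _, add_zero _, by abel⟩
  have hc3 : (fromBlocks (δ • Pm) G1ᵀ G1 X⁻¹).PosSemidef := by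
    rw [← hsum]; exact hc2.add hpadPSD
  have hXipd : (X⁻¹).PosDef := hXpd.inv
  letI := hXipd.isUnit.invertible
  have hBH2 : (G1ᵀ)ᴴ = G1 := by rw [conjT_eq, transpose_transpose]
  have hc4 : (fromBlocks (δ • Pm) G1ᵀ ((G1ᵀ)ᴴ) X⁻¹).PosSemidef := by
    rw [hBH2]; exact hc3
  have hs2 := (PosDef.fromBlocks₂₂ _ _ hXipd).mp hc4
  have hXii : (X⁻¹)⁻¹ = X := Matrix.nonsing_inv_nonsing_inv _ hXdet
  rw [hBH2, hXii] at hs2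
  have hfin : G1ᵀ * X * G1 =
      Fclᵀ * fromBlocks (1 : Matrix (Fin n) (Fin n) ℝ) 0 0 (0 : Matrix (Fin n) (Fin n) ℝ) * Pm *
      fromBlocks (1 : Matrix (Fin n) (Fin n) ℝ) 0 0 (0 : Matrix (Fin n) (Fin n) ℝ) * Fcl := by
    rw [hG1, hFcl, hPm, transpose_fromCols, fromRows_mul, fromRows_mul_fromCols,
      fromBlocks_transpose, Matrix.fromBlocks_multiply, Matrix.fromBlocks_multiply,
      Matrix.fromBlocks_multiply, Matrix.fromBlocks_multiply, Matrix.fromBlocks_inj]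
    refine ⟨?_, ?_, ?_, ?_⟩ <;>
      simp [Matrix.mul_assoc]
  rw [hfin] at hs2
  exact ⟨Pm, Ac, Bc, Cc, K4, hPmpd, hs1, hs2⟩
end
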